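/- Let μ = μ₁ ⊗ ν be a product probability measure on ℝ × ℝ^k with x = (x₁, x⊥), let c > 0, assume μ₁({0}) = 0 and ∫ ‖x⊥‖² dν < ∞, and let labels be generated by the calibrated logistic model with w* = c·e₁. Define Err = ∫ min(σ(c·t), 1−σ(c·t)) dμ₁(t) (the limiting error), A = ∫ σ(c·x₁)·(1−σ(c·x₁))·x⊥·x⊥ᵀ dμ, and C = ∫ x⊥·x⊥ᵀ dν. If Err > 0, then (1/(4·Err))·A ⪯ (1/4)·C ⪯ (1/(2·Err))·A in the Loewner order. -/

import Mathlib

open MeasureTheory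

/-- The logistic sigmoid `σ(a) = 1 / (1 + exp (−a))`. -/
noncomputable def sigmoid (a : ℝ) : ℝ := 1 / (1 + Real.exp (-a))

lemma sigmoid_pos (a : ℝ) : 0 < sigmoid a := by unfold sigmoid; positivity

lemma sigmoid_lt_one (a : ℝ) : sigmoid a < 1 := by
  unfold sigmoid
  rw [div_lt_one (by positivity)]
  linarith [Real.exp_pos (-a)]

lemma sigmoid_continuous : Continuous sigmoid := by
  unfold sigmoid
  exact continuous_const.div (by continuity) (fun a => by positivity)

lemma coord_abs_le_norm {k : ℕ} (v : EuclideanSpace ℝ (Fin k)) (i : Fin k) : |v i| ≤ ‖v‖ := by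
  rw [EuclideanSpace.norm_eq]
  have h1 : |v i| = Real.sqrt (‖v i‖ ^ 2) := by
    rw [Real.sqrt_sq_eq_abs]; simp [Real.norm_eq_abs]
  rw [h1]
  apply Real.sqrt_le_sqrt
  exact Finset.single_le_sum (f := fun j => ‖v j‖ ^ 2) (fun j _ => by positivity) (Finset.mem_univ i)

lemma smul_psd {k : ℕ} {C : Matrix (Fin k) (Fin k) ℝ} (hC : C.PosSemidef) {t : ℝ} (ht : 0 ≤ t) :
    (t • C).PosSemidef := by
  rw [Matrix.posSemidef_iff_dotProduct_mulVec]
  refine ⟨?_, fun x => ?_⟩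
  · show (t • C).conjTranspose = t • C
    rw [Matrix.conjTranspose_smul, star_trivial, hC.1]
  · rw [Matrix.smul_mulVec, dotProduct_smul, smul_eq_mul]
    exact mul_nonneg ht ((Matrix.posSemidef_iff_dotProduct_mulVec.mp hC).2 x)

/-- Let `μ = μ₁ ⊗ ν` be a product probability measure on `ℝ × ℝᵏ`, `c > 0`,
`μ₁({0}) = 0`, `∫ ‖x⊥‖² dν < ∞`, with labels generated by the calibrated logistic
model with `w* = c e₁`. With `Err = ∫ min (σ(c t)) (1 − σ(c t)) dμ₁` (the limiting
error), `A = ∫ σ(c x₁)(1 − σ(c x₁)) x⊥ x⊥ᵀ dμ`, `C = ∫ x⊥ x⊥ᵀ dν`, if `Err > 0`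
then `(1/(4 Err)) A ⪯ (1/4) C ⪯ (1/(2 Err)) A` in the Loewner order. -/
theorem fisher_sandwich {k : ℕ} (μ₁ : Measure ℝ) (ν : Measure (EuclideanSpace ℝ (Fin k)))
    [IsProbabilityMeasure μ₁] [IsProbabilityMeasure ν] (c : ℝ) (hc : 0 < c)
    (h0 : μ₁ {0} = 0)
    (hint : Integrable (fun v : EuclideanSpace ℝ (Fin k) => ‖v‖ ^ 2) ν)
    (Err : ℝ) (hErr_def : Err = ∫ t, min (sigmoid (c * t)) (1 - sigmoid (c * t)) ∂μ₁)
    (hErr_pos : 0 < Err)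
    (A C : Matrix (Fin k) (Fin k) ℝ)
    (hA : A = Matrix.of fun i j : Fin k =>
        ∫ x : ℝ × EuclideanSpace ℝ (Fin k),
          sigmoid (c * x.1) * (1 - sigmoid (c * x.1)) * (x.2 i * x.2 j) ∂(μ₁.prod ν))
    (hC : C = Matrix.of fun i j : Fin k => ∫ v, v i * v j ∂ν) :
    ((1 / 4 : ℝ) • C - (1 / (4 * Err)) • A).PosSemidef ∧
      ((1 / (2 * Err)) • A - (1 / 4 : ℝ) • C).PosSemidef := by
  set s : ℝ → ℝ := fun t => sigmoid (c * t) * (1 - sigmoid (c * t)) with hs_def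
  set m : ℝ → ℝ := fun t => min (sigmoid (c * t)) (1 - sigmoid (c * t)) with hm_def
  set S : ℝ := ∫ t, s t ∂μ₁ with hS_def
  -- integrability of coordinate products
  have hint2 : ∀ i j : Fin k, Integrable (fun v : EuclideanSpace ℝ (Fin k) => v i * v j) ν := by
    intro i j
    refine hint.mono' ?_ (Filter.Eventually.of_forall fun v => ?_)
    · exact ((EuclideanSpace.proj i).continuous.mul
        (EuclideanSpace.proj j).continuous).aestronglyMeasurable
    · rw [Real.norm_eq_abs, abs_mul]
      calc |v i| * |v j| ≤ ‖v‖ * ‖v‖ :=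
            mul_le_mul (coord_abs_le_norm v i) (coord_abs_le_norm v j) (abs_nonneg _) (norm_nonneg _)
        _ = ‖v‖ ^ 2 := (sq ‖v‖).symm
  -- integrability of s and m
  have hs_int : Integrable s μ₁ := by
    refine (integrable_const (1 : ℝ)).mono' ?_ (Filter.Eventually.of_forall fun t => ?_)
    · exact ((sigmoid_continuous.comp (continuous_const.mul continuous_id)).mul
        (continuous_const.sub (sigmoid_continuous.comp
          (continuous_const.mul continuous_id)))).aestronglyMeasurable
    · have h1 := sigmoid_pos (c * t); have h2 := sigmoid_lt_one (c * t)
      simp only [hs_def, Real.norm_eq_abs, abs_mul]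
      rw [abs_of_pos h1, abs_of_pos (by linarith)]
      nlinarith
  have hm_int : Integrable m μ₁ := by
    refine (integrable_const (1 : ℝ)).mono' ?_ (Filter.Eventually.of_forall fun t => ?_)
    · exact ((sigmoid_continuous.comp (continuous_const.mul continuous_id)).min
        (continuous_const.sub (sigmoid_continuous.comp
          (continuous_const.mul continuous_id)))).aestronglyMeasurable
    · have h1 := sigmoid_pos (c * t); have h2 := sigmoid_lt_one (c * t)
      simp only [hm_def, Real.norm_eq_abs]
      rw [abs_of_pos (lt_min h1 (by linarith))]
      exact (min_le_left _ _).trans (by linarith)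
  -- pointwise inequalities
  have hsm : ∀ t, s t ≤ m t := by
    intro t
    have h1 := sigmoid_pos (c * t); have h2 := sigmoid_lt_one (c * t)
    simp only [hs_def, hm_def]
    refine le_min (by nlinarith) (by nlinarith)
  have hms : ∀ t, m t ≤ 2 * s t := by
    intro t
    have h1 := sigmoid_pos (c * t); have h2 := sigmoid_lt_one (c * t)
    simp only [hs_def, hm_def]
    rcases le_total (sigmoid (c * t)) (1 - sigmoid (c * t)) with h | h
    · rw [min_eq_left h]; nlinarith
    · rw [min_eq_right h]; nlinarith
  -- integral inequalities
  have hSErr : S ≤ Err := by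
    rw [hS_def, hErr_def]; exact integral_mono hs_int hm_int hsm
  have hErr2S : Err ≤ 2 * S := by
    rw [hErr_def, hS_def, ← integral_const_mul]
    exact integral_mono hm_int (hs_int.const_mul 2) hms
  have hS_pos : 0 < S := by linarith
  -- A = S • C
  have hAC : A = S • C := by
    ext i j
    rw [hA, hC, Matrix.smul_apply, Matrix.of_apply, Matrix.of_apply, smul_eq_mul, hS_def]
    exact integral_prod_mul (μ := μ₁) (ν := ν) s (fun v => v i * v j)
  -- C is PosSemidef
  have hC_psd : C.PosSemidef := by
    rw [Matrix.posSemidef_iff_dotProduct_mulVec]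
    constructor
    · show C.conjTranspose = C
      ext i j
      rw [hC]
      simp only [Matrix.conjTranspose_apply, Matrix.of_apply, star_trivial]
      congr 1; ext v; ring
    · intro x
      have hij : ∀ i j : Fin k,
          Integrable (fun v : EuclideanSpace ℝ (Fin k) => x i * v i * (x j * v j)) ν := by
        intro i j
        rw [show (fun v : EuclideanSpace ℝ (Fin k) => x i * v i * (x j * v j))
            = fun v => (x i * x j) * (v i * v j) from by ext v; ring]
        exact (hint2 i j).const_mul _
      have key : ∀ i, x i * (C.mulVec x) i
          = ∫ v, ∑ j, x i * v i * (x j * v j) ∂ν := by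
        intro i
        rw [integral_finset_sum _ (fun j _ => hij i j)]
        simp only [hC, Matrix.mulVec, dotProduct, Matrix.of_apply, Finset.mul_sum]
        refine Finset.sum_congr rfl fun j _ => ?_
        rw [show (fun v : EuclideanSpace ℝ (Fin k) => x i * v i * (x j * v j))
            = fun v => (x i * x j) * (v i * v j) from by ext v; ring, integral_const_mul]
        ring
      have : (0:ℝ) ≤ ∑ i, x i * (C.mulVec x) i := by
        calc (0:ℝ) ≤ ∫ v, (∑ i, x i * v i) ^ 2 ∂ν := integral_nonneg fun v => sq_nonneg _
          _ = ∑ i, x i * (C.mulVec x) i := by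
              simp only [key]
              rw [← integral_finset_sum _ (fun i _ => integrable_finset_sum _ (fun j _ => hij i j))]
              congr 1; ext v
              rw [sq, Finset.sum_mul_sum]
      simpa [dotProduct, star_trivial] using this
  constructor
  · have heq : (1 / 4 : ℝ) • C - (1 / (4 * Err)) • A = (1 / 4 - S / (4 * Err)) • C := by
      rw [hAC, smul_smul, sub_smul]
      congr 2
      field_simp
    rw [heq]
    refine smul_psd hC_psd ?_
    rw [sub_nonneg, div_le_div_iff₀ (by linarith) (by norm_num)]
    linarith
  · have heq : (1 / (2 * Err)) • A - (1 / 4 : ℝ) • C = (S / (2 * Err) - 1 / 4) • C := by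
      rw [hAC, smul_smul, sub_smul]
      congr 2
      field_simp
    rw [heq]
    refine smul_psd hC_psd ?_
    rw [sub_nonneg, div_le_div_iff₀ (by norm_num) (by linarith)]
    linarith
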